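/- For every θ ≥ 0, θ − 1 + ∫₀^∞ e^{-θr} · 3(1+2r)^{-5/2} dr = (1/√2) θ^{3/2} e^{θ/2} Γ(1/2, θ/2), where Γ(1/2, z) = ∫_z^∞ e^{-t} t^{-1/2} dt. -/

import Mathlib

open MeasureTheory Real

/-- The upper incomplete gamma function `Γ(a,z) = ∫_z^∞ e^{-t} t^{a-1} dt`. -/
noncomputable def uincGamma (a z : ℝ) : ℝ := ∫ t in Set.Ioi z, Real.exp (-t) * t ^ (a - 1)

open Set Filter Topology

lemma aux_hasDeriv (θ p : ℝ) {x : ℝ} (hx : 0 < 1 + 2*x) :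
    HasDerivAt (fun r : ℝ => -(Real.exp (-θ*r) * (1+2*r) ^ (-p)))
      (θ * Real.exp (-θ*x) * (1+2*x) ^ (-p) + 2*p*Real.exp (-θ*x) * (1+2*x) ^ (-(p+1))) x := by
  have h1 : HasDerivAt (fun r : ℝ => Real.exp (-θ*r)) (Real.exp (-θ*x) * (-θ)) x := by
    simpa using ((hasDerivAt_id x).const_mul (-θ)).exp
  have hi : HasDerivAt (fun r : ℝ => 1+2*r) 2 x := by
    simpa using ((hasDerivAt_id x).const_mul 2).const_add (1:ℝ)
  have h2 : HasDerivAt (fun r : ℝ => (1+2*r) ^ (-p)) (2 * (-p) * (1+2*x) ^ (-p-1)) x :=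
    hi.rpow_const (Or.inl hx.ne')
  have h3 := (h1.mul h2).neg
  rw [show (-p-1 : ℝ) = -(p+1) by ring] at h3
  convert h3 using 1
  all_goals first | rfl | ring

lemma aux_tendsto (θ p : ℝ) (hθ : 0 ≤ θ) (hp : 0 < p) :
    Tendsto (fun r : ℝ => -(Real.exp (-θ*r) * (1+2*r) ^ (-p))) atTop (𝓝 0) := by
  rw [show (0:ℝ) = -0 by ring]
  apply Filter.Tendsto.neg
  have h0 : Tendsto (fun r : ℝ => (1+2*r) ^ (-p)) atTop (𝓝 0) := by
    apply (tendsto_rpow_neg_atTop hp).comp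
    apply tendsto_atTop_add_const_left
    exact Tendsto.const_mul_atTop two_pos tendsto_id
  apply squeeze_zero' ?_ ?_ h0
  · filter_upwards [eventually_ge_atTop (0:ℝ)] with r hr
    positivity
  · filter_upwards [eventually_ge_atTop (0:ℝ)] with r hr
    have h1 : Real.exp (-θ*r) ≤ 1 := by
      rw [Real.exp_le_one_iff]
      nlinarith
    have h2 : (0:ℝ) ≤ (1+2*r) ^ (-p) := by positivity
    nlinarith

lemma aux_int_sum (θ p : ℝ) (hθ : 0 ≤ θ) (hp : 0 < p) :
    IntegrableOn (fun x : ℝ =>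
      θ * Real.exp (-θ*x) * (1+2*x) ^ (-p) + 2*p*Real.exp (-θ*x) * (1+2*x) ^ (-(p+1))) (Ioi 0) := by
  have hderiv : ∀ x ∈ Ici (0:ℝ), HasDerivAt (fun r : ℝ => -(Real.exp (-θ*r) * (1+2*r) ^ (-p)))
      (θ * Real.exp (-θ*x) * (1+2*x) ^ (-p) + 2*p*Real.exp (-θ*x) * (1+2*x) ^ (-(p+1))) x := by
    intro x hx
    exact aux_hasDeriv θ p (by simp only [mem_Ici] at hx; linarith)
  apply integrableOn_Ioi_deriv_of_nonneg' hderiv ?_ (aux_tendsto θ p hθ hp)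
  intro x hx
  have : (0:ℝ) < x := hx
  positivity

lemma aux_key (θ p : ℝ) (hθ : 0 ≤ θ) (hp : 0 < p) :
    ∫ r in Ioi (0:ℝ),
      (θ * Real.exp (-θ*r) * (1+2*r) ^ (-p) + 2*p*Real.exp (-θ*r) * (1+2*r) ^ (-(p+1))) = 1 := by
  have hderiv : ∀ x ∈ Ici (0:ℝ), HasDerivAt (fun r : ℝ => -(Real.exp (-θ*r) * (1+2*r) ^ (-p)))
      (θ * Real.exp (-θ*x) * (1+2*x) ^ (-p) + 2*p*Real.exp (-θ*x) * (1+2*x) ^ (-(p+1))) x := by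
    intro x hx
    exact aux_hasDeriv θ p (by simp only [mem_Ici] at hx; linarith)
  rw [integral_Ioi_of_hasDerivAt_of_tendsto' hderiv (aux_int_sum θ p hθ hp) (aux_tendsto θ p hθ hp)]
  norm_num

lemma aux_meas (θ q : ℝ) : AEStronglyMeasurable (fun r : ℝ => Real.exp (-θ*r) * (1+2*r) ^ q)
    (volume.restrict (Ioi 0)) := by
  apply ContinuousOn.aestronglyMeasurable ?_ measurableSet_Ioi
  apply ContinuousOn.mul (Continuous.continuousOn (by continuity))
  apply ContinuousOn.rpow_const ((by continuity : Continuous fun r : ℝ => 1+2*r).continuousOn)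
  intro x hx
  have hx0 : (0:ℝ) < x := hx
  left
  nlinarith

lemma aux_int1 (θ q : ℝ) (hθ : 0 < θ) (hq : q < 0) :
    IntegrableOn (fun r : ℝ => Real.exp (-θ*r) * (1+2*r) ^ q) (Ioi 0) := by
  have hs := (aux_int_sum θ (-q) hθ.le (by linarith)).const_mul θ⁻¹
  apply Integrable.mono' hs (aux_meas θ q)
  filter_upwards [ae_restrict_mem measurableSet_Ioi] with x hx
  have hx0 : (0:ℝ) < x := hx
  have h1 : (0:ℝ) < 1 + 2*x := by linarith
  rw [Real.norm_eq_abs, abs_of_nonneg (by positivity)]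
  rw [neg_neg]
  have h2 : (0:ℝ) ≤ 2*(-q)*Real.exp (-θ*x) * (1+2*x) ^ (-(-q+1)) :=
    mul_nonneg (mul_nonneg (by linarith) (Real.exp_pos _).le) (Real.rpow_nonneg h1.le _)
  calc Real.exp (-θ*x) * (1+2*x) ^ q
      = θ⁻¹ * (θ * Real.exp (-θ*x) * (1+2*x) ^ q) := by
        field_simp
    _ ≤ θ⁻¹ * (θ * Real.exp (-θ*x) * (1+2*x) ^ q
          + 2*(-q)*Real.exp (-θ*x) * (1+2*x) ^ (-(-q+1))) := by
        apply mul_le_mul_of_nonneg_left (le_add_of_nonneg_right h2) (inv_pos.2 hθ).le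

/-- The Laplace exponent identity: for `θ ≥ 0`,
`θ − 1 + ∫₀^∞ e^{-θr} 3(1+2r)^{-5/2} dr = (1/√2) θ^{3/2} e^{θ/2} Γ(1/2, θ/2)`. -/
theorem laplace_exponent_formula (θ : ℝ) (hθ : 0 ≤ θ) :
    θ - 1 + ∫ r in Set.Ioi (0:ℝ), Real.exp (-θ * r) * ((3:ℝ) * (1 + 2*r) ^ (-(5:ℝ)/2))
      = (1 / Real.sqrt 2) * θ ^ ((3:ℝ)/2) * Real.exp (θ/2) * uincGamma ((1:ℝ)/2) (θ/2) := by
  rcases hθ.eq_or_lt with rfl | hθ2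
  · have h1 : ∫ r in Ioi (0:ℝ), Real.exp (-(0:ℝ) * r) * ((3:ℝ) * (1 + 2*r) ^ (-(5:ℝ)/2))
        = ∫ r in Ioi (0:ℝ), ((0:ℝ) * Real.exp (-(0:ℝ)*r) * (1+2*r) ^ (-(3/2:ℝ))
            + 2*(3/2)*Real.exp (-(0:ℝ)*r) * (1+2*r) ^ (-((3/2:ℝ)+1))) := by
      apply setIntegral_congr_fun measurableSet_Ioi
      intro r hr
      rw [show (-((3/2:ℝ)+1)) = -(5:ℝ)/2 by norm_num]
      ring
    rw [h1, aux_key 0 (3/2) le_rfl (by norm_num), Real.zero_rpow (by norm_num : ((3:ℝ)/2) ≠ 0)]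
    ring
  · have intJ := aux_int1 θ (-(1:ℝ)/2) hθ2 (by norm_num)
    have intK := aux_int1 θ (-(3:ℝ)/2) hθ2 (by norm_num)
    have int5 := aux_int1 θ (-(5:ℝ)/2) hθ2 (by norm_num)
    have int5' : IntegrableOn (fun r : ℝ =>
        Real.exp (-θ*r) * ((3:ℝ) * (1+2*r) ^ (-(5:ℝ)/2))) (Ioi 0) :=
      (int5.const_mul 3).congr (Eventually.of_forall fun r => by ring)
    -- key A
    have eqA : ∫ r in Ioi (0:ℝ), (θ * (Real.exp (-θ*r) * (1+2*r) ^ (-(3:ℝ)/2))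
        + Real.exp (-θ*r) * ((3:ℝ) * (1+2*r) ^ (-(5:ℝ)/2))) = 1 := by
      rw [setIntegral_congr_fun measurableSet_Ioi (g := fun r : ℝ =>
        θ * Real.exp (-θ*r) * (1+2*r) ^ (-(3/2:ℝ))
          + 2*(3/2)*Real.exp (-θ*r) * (1+2*r) ^ (-((3/2:ℝ)+1)))
        (fun r hr => by
          simp only
          rw [show (-((3/2:ℝ)+1)) = -(5:ℝ)/2 by norm_num,
            show (-(3/2:ℝ)) = -(3:ℝ)/2 by norm_num]
          ring)]
      exact aux_key θ (3/2) hθ (by norm_num)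
    rw [integral_add (intK.const_mul θ) int5', MeasureTheory.integral_const_mul] at eqA
    -- key B
    have eqB : ∫ r in Ioi (0:ℝ), (θ * (Real.exp (-θ*r) * (1+2*r) ^ (-(1:ℝ)/2))
        + Real.exp (-θ*r) * (1+2*r) ^ (-(3:ℝ)/2)) = 1 := by
      rw [setIntegral_congr_fun measurableSet_Ioi (g := fun r : ℝ =>
        θ * Real.exp (-θ*r) * (1+2*r) ^ (-(1/2:ℝ))
          + 2*(1/2)*Real.exp (-θ*r) * (1+2*r) ^ (-((1/2:ℝ)+1)))
        (fun r hr => by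
          simp only
          rw [show (-((1/2:ℝ)+1)) = -(3:ℝ)/2 by norm_num,
            show (-(1/2:ℝ)) = -(1:ℝ)/2 by norm_num]
          ring)]
      exact aux_key θ (1/2) hθ (by norm_num)
    rw [integral_add (intJ.const_mul θ) intK, MeasureTheory.integral_const_mul] at eqB
    -- substitution for uincGamma
    have hG : uincGamma ((1:ℝ)/2) (θ/2) = θ * (Real.exp (-(θ/2)) * ((θ/2) ^ (-(1:ℝ)/2)
        * ∫ r in Ioi (0:ℝ), Real.exp (-θ*r) * (1+2*r) ^ (-(1:ℝ)/2))) := by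
      have himg : Ioi (θ/2) = (fun x : ℝ => x + θ/2) '' Ioi 0 := by
        rw [image_add_const_Ioi, zero_add]
      have hshift : uincGamma ((1:ℝ)/2) (θ/2)
          = ∫ s in Ioi (0:ℝ), Real.exp (-(s + θ/2)) * (s + θ/2) ^ ((1:ℝ)/2 - 1) := by
        rw [uincGamma, himg]
        exact (measurePreserving_add_right volume (θ/2)).setIntegral_image_emb
          (measurableEmbedding_addRight (θ/2)) _ _
      have hscale := integral_comp_mul_left_Ioi
        (fun s : ℝ => Real.exp (-(s + θ/2)) * (s + θ/2) ^ ((1:ℝ)/2 - 1)) 0 hθ2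
      rw [mul_zero] at hscale
      have hstep : (∫ s in Ioi (0:ℝ), Real.exp (-(s + θ/2)) * (s + θ/2) ^ ((1:ℝ)/2 - 1))
          = θ * ∫ x in Ioi (0:ℝ), Real.exp (-(θ*x + θ/2)) * (θ*x + θ/2) ^ ((1:ℝ)/2 - 1) := by
        rw [hscale, smul_eq_mul, ← mul_assoc, mul_inv_cancel₀ hθ2.ne', one_mul]
      rw [hshift, hstep]
      congr 1
      rw [setIntegral_congr_fun measurableSet_Ioi (g := fun x : ℝ =>
        (Real.exp (-(θ/2)) * (θ/2) ^ (-(1:ℝ)/2)) * (Real.exp (-θ*x) * (1+2*x) ^ (-(1:ℝ)/2)))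
        (fun x hx => by
          have hx0 : (0:ℝ) < x := hx
          simp only
          rw [show θ*x + θ/2 = θ/2 * (1+2*x) by ring]
          rw [Real.mul_rpow (by positivity) (by positivity)]
          rw [show ((1:ℝ)/2 - 1) = -(1:ℝ)/2 by norm_num]
          rw [show (-(θ/2 * (1+2*x))) = (-(θ/2)) + (-θ*x) by ring, Real.exp_add]
          ring)]
      rw [MeasureTheory.integral_const_mul]
      ring
    -- final algebra
    have hexp : Real.exp (θ/2) * Real.exp (-(θ/2)) = 1 := by
      rw [← Real.exp_add]; simp
    have hpow : 1 / Real.sqrt 2 * θ ^ ((3:ℝ)/2) * (θ/2) ^ (-(1:ℝ)/2) = θ := by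
      rw [show (-(1:ℝ)/2) = -((1:ℝ)/2) by norm_num,
        Real.rpow_neg (by positivity), ← Real.sqrt_eq_rpow,
        Real.sqrt_div hθ2.le 2,
        show (3:ℝ)/2 = 1 + 1/2 by norm_num,
        Real.rpow_add hθ2, Real.rpow_one, ← Real.sqrt_eq_rpow]
      have h1 : Real.sqrt 2 ≠ 0 := by positivity
      have h2 : Real.sqrt θ ≠ 0 := by positivity
      field_simp
    rw [hG]
    linear_combination eqA - θ*eqB
      - θ*(∫ r in Ioi (0:ℝ), Real.exp (-θ*r) * (1+2*r) ^ (-(1:ℝ)/2))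
        * ((1/Real.sqrt 2)*θ^((3:ℝ)/2)*(θ/2)^(-(1:ℝ)/2)) * hexp
      - θ*(∫ r in Ioi (0:ℝ), Real.exp (-θ*r) * (1+2*r) ^ (-(1:ℝ)/2)) * hpow
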